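/- Let V be a finite-dimensional semisimple Jordan pair over an algebraically closed field of characteristic not 2, with a G-grading Γ for an abelian group G. If g ∈ G is in the support of Γ on V^σ, then the subpair (V^σ_g, V^{-σ}_{-g}) is a semisimple Jordan pair. -/
import Mathlib


/-- A (linear) Jordan pair over a field `F`.  In characteristic `≠ 2` the
quadratic operators are recovered as `Q_x y = (1/2) • Dp x y x`. -/
structure JordanPair (F : Type) [Field F] (Vp Vm : Type)
    [AddCommGroup Vp] [Module F Vp] [AddCommGroup Vm] [Module F Vm] where
  Dp : Vp →ₗ[F] Vm →ₗ[F] Vp →ₗ[F] Vp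
  Dm : Vm →ₗ[F] Vp →ₗ[F] Vm →ₗ[F] Vm
  symm_p : ∀ x y z, Dp x y z = Dp z y x
  symm_m : ∀ x y z, Dm x y z = Dm z y x
  ljp2_p : ∀ x y u v z,
    Dp x y (Dp u v z) - Dp u v (Dp x y z) = Dp (Dp x y u) v z - Dp u (Dm y x v) z
  ljp2_m : ∀ x y u v z,
    Dm x y (Dm u v z) - Dm u v (Dm x y z) = Dm (Dm x y u) v z - Dm u (Dp y x v) z

/-- A grading of a Jordan pair by an abelian group `G`. -/
structure JPGrading {F : Type} [Field F] {Vp Vm : Type}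
    [AddCommGroup Vp] [Module F Vp] [AddCommGroup Vm] [Module F Vm]
    (G : Type) [AddCommGroup G] [DecidableEq G] (P : JordanPair F Vp Vm) where
  gp : G → Submodule F Vp
  gm : G → Submodule F Vm
  int_p : DirectSum.IsInternal gp
  int_m : DirectSum.IsInternal gm
  mul_p : ∀ g h k, ∀ x ∈ gp g, ∀ y ∈ gm h, ∀ z ∈ gp k, P.Dp x y z ∈ gp (g + h + k)
  mul_m : ∀ g h k, ∀ x ∈ gm g, ∀ y ∈ gp h, ∀ z ∈ gm k, P.Dm x y z ∈ gm (g + h + k)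

lemma jp_aux {F : Type} [Field F] {Vp Vm : Type}
    [AddCommGroup Vp] [Module F Vp] [AddCommGroup Vm] [Module F Vm]
    {G : Type} [AddCommGroup G] [DecidableEq G]
    (Ap : G → Submodule F Vp) (Am : G → Submodule F Vm)
    (hp : DirectSum.IsInternal Ap) (hm : DirectSum.IsInternal Am)
    (T : Vp →ₗ[F] Vm →ₗ[F] Vp →ₗ[F] Vp)
    (hT : ∀ g h k, ∀ x ∈ Ap g, ∀ y ∈ Am h, ∀ z ∈ Ap k, T x y z ∈ Ap (g + h + k))
    (g : G) (x : Vp) (hx : x ∈ Ap g) (y : Vm) (hy : T x y x = (2 : F) • x) :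
    ∃ y' ∈ Am (-g), T x y' x = (2 : F) • x := by
  letI := hp.chooseDecomposition
  letI := hm.chooseDecomposition
  classical
  set d : Vm → ∀ h, Am h := fun v h => DirectSum.decompose Am v h with hd
  refine ⟨(DirectSum.decompose Am y (-g) : Vm), (DirectSum.decompose Am y (-g)).2, ?_⟩
  have hy2 : y = ∑ h ∈ (DirectSum.decompose Am y).support, ((DirectSum.decompose Am y h : Vm)) :=
    (DirectSum.sum_support_decompose Am y).symm
  -- expand
  have hsum : T x y x = ∑ h ∈ (DirectSum.decompose Am y).support,
      T x (DirectSum.decompose Am y h : Vm) x := by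
    conv_lhs => rw [hy2]
    rw [map_sum]
    simp
  have hcomp : (DirectSum.decompose Ap (T x y x) g : Vp)
      = T x (DirectSum.decompose Am y (-g) : Vm) x := by
    rw [hsum, DirectSum.decompose_sum, DFinsupp.finset_sum_apply, AddSubmonoidClass.coe_finset_sum]
    rw [Finset.sum_eq_single (-g)]
    · exact DirectSum.decompose_of_mem_same Ap
        (by simpa using hT g (-g) g x hx _ (DirectSum.decompose Am y (-g)).2 x hx)
    · intro h _ hne
      apply DirectSum.decompose_of_mem_ne Ap
        (hT g h g x hx _ (DirectSum.decompose Am y h).2 x hx)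
      intro hEq
      apply hne
      have : h = -g := by
        have := hEq  -- g + h + g = g
        abel_nf at hEq ⊢
        linear_combination (norm := abel) hEq - (2:ℤ) • (rfl : g = g)
      exact this
    · intro hns
      simp [DFinsupp.notMem_support_iff.mp hns]
  have hcomp2 : (DirectSum.decompose Ap (T x y x) g : Vp) = (2 : F) • x := by
    rw [hy]
    exact DirectSum.decompose_of_mem_same Ap (Submodule.smul_mem _ _ hx)
  rw [← hcomp, hcomp2]

/-- Let `V` be a finite-dimensional semisimple Jordan pair over an algebraically
closed field of characteristic not 2 (for such pairs, semisimplicity is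
equivalent to von Neumann regularity: `Q_x y = x`, i.e. `{x,y,x} = 2x`, has a
solution for every `x`).  If `g` lies in the support of a `G`-grading on `V^σ`,
then the subpair `(V^σ_g, V^{-σ}_{-g})` is semisimple (= von Neumann regular). -/
theorem stmt_4 (F : Type) [Field F] [IsAlgClosed F] (hchar : (2 : F) ≠ 0)
    (Vp Vm : Type) [AddCommGroup Vp] [Module F Vp] [AddCommGroup Vm] [Module F Vm]
    [FiniteDimensional F Vp] [FiniteDimensional F Vm]
    (P : JordanPair F Vp Vm)
    (hssp : ∀ x : Vp, ∃ y : Vm, P.Dp x y x = (2 : F) • x)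
    (hssm : ∀ y : Vm, ∃ x : Vp, P.Dm y x y = (2 : F) • y)
    (G : Type) [AddCommGroup G] [DecidableEq G]
    (Γ : JPGrading G P) (g : G)
    (hg : Γ.gp g ≠ ⊥ ∨ Γ.gm (-g) ≠ ⊥) :
    (∀ x ∈ Γ.gp g, ∃ y ∈ Γ.gm (-g), P.Dp x y x = (2 : F) • x) ∧
    (∀ y ∈ Γ.gm (-g), ∃ x ∈ Γ.gp g, P.Dm y x y = (2 : F) • y) := by
  constructor
  · intro x hx
    obtain ⟨y, hy⟩ := hssp x
    exact jp_aux Γ.gp Γ.gm Γ.int_p Γ.int_m P.Dp Γ.mul_p g x hx y hy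
  · intro y hy
    obtain ⟨x, hxy⟩ := hssm y
    have := jp_aux Γ.gm Γ.gp Γ.int_m Γ.int_p P.Dm Γ.mul_m (-g) y hy x hxy
    simpa using this
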